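/- Let A ⊆ X be measurable. (1) If A' ⊆ X' is measurable with T(A) ⊆ A' (set-theoretic image), then T̂A ⊆̇ A'; in particular, if T(A) is measurable then T̂A ⊆̇ T(A). (2) If T(A) is measurable, then there exists a measurable set A₀ ⊆ A with λ(A \ A₀) = 0 such that T(A₀) is measurable and T̂A =̇ T(A₀) (up to λ'-null sets). -/

import Mathlib

open MeasureTheory Set

/-- (1) If `T(A) ⊆ A'` with `A'` measurable, then `T̂A ⊆̇ A'`; in particular
if `T(A)` is measurable then `T̂A ⊆̇ T(A)`. (2) If `T(A)` is measurable then there is a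
measurable `A₀ ⊆ A` with `λ(A \ A₀) = 0`, `T(A₀)` measurable, and `T̂A =̇ T(A₀)`. -/
theorem stmt_6 {X X' : Type*} [MeasurableSpace X] [MeasurableSpace X']
    (lam : Measure X) (lam' : Measure X') [SigmaFinite lam] [SigmaFinite lam']
    (T : X → X') (hT : Measurable T) (hnp : lam.map T ≪ lam')
    (hatT : Set X → Set X')
    (hm : ∀ A : Set X, MeasurableSet A → MeasurableSet (hatT A))
    (hchar : ∀ A : Set X, MeasurableSet A → ∀ C' : Set X', MeasurableSet C' →
      (0 < lam' (hatT A ∩ C') ↔ 0 < lam (A ∩ T ⁻¹' C')))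
    (A : Set X) (hA : MeasurableSet A) :
    (∀ A' : Set X', MeasurableSet A' → T '' A ⊆ A' → lam' (hatT A \ A') = 0) ∧
    (MeasurableSet (T '' A) → lam' (hatT A \ T '' A) = 0) ∧
    (MeasurableSet (T '' A) →
      ∃ A₀ : Set X, MeasurableSet A₀ ∧ A₀ ⊆ A ∧ lam (A \ A₀) = 0 ∧
        MeasurableSet (T '' A₀) ∧ lam' (symmDiff (hatT A) (T '' A₀)) = 0) := by
  have part1 : ∀ A' : Set X', MeasurableSet A' → T '' A ⊆ A' → lam' (hatT A \ A') = 0 := by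
    intro A' hA' hsub
    by_contra h
    have hpos : 0 < lam' (hatT A ∩ A'ᶜ) := by
      rw [← diff_eq]; exact pos_iff_ne_zero.mpr h
    have := (hchar A hA A'ᶜ hA'.compl).mp hpos
    have hempty : A ∩ T ⁻¹' A'ᶜ = ∅ := by
      ext x
      simp only [mem_inter_iff, mem_preimage, mem_compl_iff, mem_empty_iff_false, iff_false]
      rintro ⟨hxA, hxc⟩
      exact hxc (hsub ⟨x, hxA, rfl⟩)
    rw [hempty] at this
    simp at this
  refine ⟨part1, fun hTA => part1 _ hTA Subset.rfl, fun hTA => ?_⟩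
  set A₀ := A ∩ T ⁻¹' (hatT A) with hA₀def
  have hmA₀ : MeasurableSet A₀ := hA.inter (hT (hm A hA))
  have himg : T '' A₀ = T '' A ∩ hatT A := by
    rw [hA₀def, image_inter_preimage]
  have hnullpre : lam (A \ A₀) = 0 := by
    have hiff := hchar A hA (hatT A)ᶜ (hm A hA).compl
    have : lam' (hatT A ∩ (hatT A)ᶜ) = 0 := by
      rw [inter_compl_self]; simp
    have h2 : ¬ 0 < lam (A ∩ T ⁻¹' (hatT A)ᶜ) := by
      rw [← hiff, this]; simp
    have : lam (A ∩ T ⁻¹' (hatT A)ᶜ) = 0 := by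
      simpa [pos_iff_ne_zero] using h2
    have hset : A \ A₀ = A ∩ T ⁻¹' (hatT A)ᶜ := by
      rw [hA₀def]
      ext x; simp [and_comm]
    rw [hset]; exact this
  refine ⟨A₀, hmA₀, inter_subset_left, hnullpre, himg ▸ hTA.inter (hm A hA), ?_⟩
  have h1 : lam' (hatT A \ T '' A₀) = 0 := by
    have : hatT A \ T '' A₀ ⊆ hatT A \ T '' A := by
      rw [himg]; intro x hx; exact ⟨hx.1, fun h => hx.2 ⟨h, hx.1⟩⟩
    exact measure_mono_null this (part1 _ hTA Subset.rfl)
  have h2 : lam' (T '' A₀ \ hatT A) = 0 := by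
    have : T '' A₀ \ hatT A = ∅ := by
      rw [himg, diff_eq, inter_assoc, inter_compl_self, inter_empty]
    rw [this]; simp
  rw [Set.symmDiff_def]
  exact le_antisymm (le_trans (measure_union_le _ _) (by rw [h1, h2]; simp)) zero_le
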